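/- Let (X, Σ, μ) be σ-finite with decomposition X = (⋃ₙ Aₙ) ∪ B, where the Aₙ are pairwise disjoint atoms and B is non-atomic. Let Φ₁, Φ₂, Φ₃ be Young functions with Φ₁(xy) ≤ Φ₂(x) + Φ₃(y) for all x, y ≥ 0. If u ∈ L⁰(Σ) induces a bounded multiplication operator M_u: L^{Φ₁}(Σ) → L^{Φ₂}(Σ), then (i) u = 0 μ-a.e. on B, and (ii) sup_{n} |u(Aₙ)| · Φ₃⁻¹(1/μ(Aₙ)) < ∞. -/

import Mathlib

open MeasureTheory Filter Topology

/-- A Young function: continuous, convex, even, vanishing exactly at 0,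
with superlinear growth at infinity. -/
structure YoungFunction where
  toFun : ℝ → ℝ
  continuous' : Continuous toFun
  convexOn' : ConvexOn ℝ Set.univ toFun
  even' : ∀ x, toFun (-x) = toFun x
  zero_iff' : ∀ x, toFun x = 0 ↔ x = 0
  tendsto_atTop' : Tendsto (fun x => toFun x / x) atTop atTop

instance : CoeFun YoungFunction fun _ => ℝ → ℝ := ⟨YoungFunction.toFun⟩

variable {X : Type*} [MeasurableSpace X]

/-- Membership in the Orlicz space `L^Φ(μ)`. -/
def MemOrlicz (Φ : YoungFunction) (μ : Measure X) (f : X → ℝ) : Prop :=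
  AEStronglyMeasurable f μ ∧ ∃ k > 0, Integrable (fun x => Φ (k * f x)) μ

/-- The Luxemburg norm on the Orlicz space `L^Φ(μ)`. -/
noncomputable def luxNorm (Φ : YoungFunction) (μ : Measure X) (f : X → ℝ) : ℝ :=
  sInf {k : ℝ | 0 < k ∧ ∫ x, Φ (f x / k) ∂μ ≤ 1}

/-- The generalized (right) inverse of a Young function on `[0,∞)`. -/
noncomputable def yInv (Φ : YoungFunction) (y : ℝ) : ℝ :=
  sSup {x : ℝ | 0 ≤ x ∧ Φ x ≤ y}

/-- `Φ` satisfies the `Δ₂` condition globally. -/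
def YoungDeltaTwo (Φ : YoungFunction) : Prop :=
  ∃ k > 0, ∀ x : ℝ, 0 ≤ x → Φ (2 * x) ≤ k * Φ x

/-- `Φ` satisfies the `Δ'` condition globally, with constant `c`. -/
def YoungDeltaPrime (Φ : YoungFunction) (c : ℝ) : Prop :=
  0 < c ∧ ∀ x y : ℝ, 0 ≤ x → 0 ≤ y → Φ (x * y) ≤ c * Φ x * Φ y

/-- `Φ` satisfies the `∇'` condition globally, with constant `b`. -/
def YoungNablaPrime (Φ : YoungFunction) (b : ℝ) : Prop :=
  0 < b ∧ ∀ x y : ℝ, 0 ≤ x → 0 ≤ y → Φ x * Φ y ≤ Φ (b * x * y)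

/-- `Φ ≺ Ψ` : `Φ` is weaker than `Ψ`. -/
def YoungWeaker (Φ Ψ : YoungFunction) : Prop :=
  ∃ a > 0, ∃ x₀ : ℝ, 0 ≤ x₀ ∧ ∀ x : ℝ, x₀ ≤ x → Φ x ≤ Ψ (a * x)

/-- `A` is an atom of the measure `μ`. -/
def IsAtomSet (μ : Measure X) (A : Set X) : Prop :=
  MeasurableSet A ∧ 0 < μ A ∧
    ∀ B : Set X, MeasurableSet B → B ⊆ A → μ B = 0 ∨ μ B = μ A

/-- `μ` is non-atomic on the set `S`. -/
def NonAtomicOn (μ : Measure X) (S : Set X) : Prop :=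
  ∀ A : Set X, A ⊆ S → ¬ IsAtomSet μ A

/-- A linear map between Orlicz spaces (given as a map on functions) is bounded. -/
def OrliczBounded (Φ₁ Φ₂ : YoungFunction) (μ : Measure X)
    (Tmap : (X → ℝ) → (X → ℝ)) : Prop :=
  ∃ C > 0, ∀ f : X → ℝ, MemOrlicz Φ₁ μ f →
    MemOrlicz Φ₂ μ (Tmap f) ∧ luxNorm Φ₂ μ (Tmap f) ≤ C * luxNorm Φ₁ μ f

/-- The atomic decomposition of a σ-finite measure space: `X = (⋃ n, A n) ∪ B`
with the `A n` pairwise disjoint atoms of finite measure and `B` non-atomic. -/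
def AtomicDecomposition (μ : Measure X) (A : ℕ → Set X) (B : Set X) : Prop :=
  (∀ n, IsAtomSet μ (A n)) ∧ (∀ n, μ (A n) < ⊤) ∧
    Pairwise (Function.onFun Disjoint A) ∧ (∀ n, Disjoint (A n) B) ∧
    MeasurableSet B ∧ NonAtomicOn μ B ∧ (⋃ n, A n) ∪ B = Set.univ

section Aux

namespace YoungFunction

variable (Φ : YoungFunction)

theorem zero : Φ 0 = 0 := (Φ.zero_iff' 0).mpr rfl

theorem nonneg (x : ℝ) : 0 ≤ Φ x := by
  have h := Φ.convexOn'.2 (Set.mem_univ x) (Set.mem_univ (-x))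
    (by norm_num : (0:ℝ) ≤ 1/2) (by norm_num : (0:ℝ) ≤ 1/2) (by norm_num)
  simp only [smul_eq_mul, Φ.even'] at h
  have : (1/2 : ℝ) * x + (1/2) * (-x) = 0 := by ring
  rw [this, Φ.zero] at h
  linarith

theorem pos {x : ℝ} (hx : x ≠ 0) : 0 < Φ x :=
  lt_of_le_of_ne (Φ.nonneg x) (fun h => hx ((Φ.zero_iff' x).mp h.symm))

theorem smul_le {c x : ℝ} (hc0 : 0 ≤ c) (hc1 : c ≤ 1) : Φ (c * x) ≤ c * Φ x := by
  have h := Φ.convexOn'.2 (Set.mem_univ x) (Set.mem_univ 0)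
    hc0 (by linarith : (0:ℝ) ≤ 1 - c) (by ring)
  simp only [smul_eq_mul, mul_zero, add_zero, Φ.zero] at h
  linarith

theorem abs_eq (x : ℝ) : Φ |x| = Φ x := by
  rcases abs_choice x with h | h
  · rw [h]
  · rw [h, Φ.even']

theorem mono {a b : ℝ} (ha : 0 ≤ a) (hab : a ≤ b) : Φ a ≤ Φ b := by
  rcases eq_or_lt_of_le (ha.trans hab) with hb | hb
  · have : a = 0 := le_antisymm (hab.trans hb.symm.le) ha
    rw [this, ← hb]
  · have : a = (a/b) * b := by field_simp
    rw [this]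
    calc Φ ((a/b) * b) ≤ (a/b) * Φ b := Φ.smul_le (by positivity) (by
      rw [div_le_one hb]; exact hab)
    _ ≤ 1 * Φ b := by
      apply mul_le_mul_of_nonneg_right _ (Φ.nonneg b)
      rw [div_le_one hb]; exact hab
    _ = Φ b := one_mul _

theorem mono_abs {a b : ℝ} (hab : |a| ≤ b) : Φ a ≤ Φ b := by
  rw [← Φ.abs_eq a]; exact Φ.mono (abs_nonneg a) hab

theorem half_le {x : ℝ} : Φ (x / 2) ≤ Φ x / 2 := by
  have := Φ.smul_le (c := 1/2) (x := x) (by norm_num) (by norm_num)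
  calc Φ (x/2) = Φ ((1/2) * x) := by ring_nf
  _ ≤ (1/2) * Φ x := this
  _ = Φ x / 2 := by ring

theorem exists_gt (t : ℝ) : ∃ x : ℝ, 0 ≤ x ∧ t < Φ x := by
  have h := Φ.tendsto_atTop'.eventually_ge_atTop 1
  rw [eventually_atTop] at h
  obtain ⟨x₁, hx₁⟩ := h
  refine ⟨max x₁ (max (t+1) 1), le_trans (by norm_num) (le_max_of_le_right (le_max_right _ _)), ?_⟩
  set x := max x₁ (max (t+1) 1) with hx
  have hxpos : (0:ℝ) < x := lt_of_lt_of_le one_pos (le_max_of_le_right (le_max_right _ _))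
  have h1 : 1 ≤ Φ x / x := hx₁ x (le_max_left _ _)
  have : x ≤ Φ x := by
    rw [le_div_iff₀ hxpos] at h1; linarith
  have : t + 1 ≤ x := le_max_of_le_right (le_max_left _ _)
  linarith

theorem setOf_nonempty {t : ℝ} (ht : 0 ≤ t) : {x : ℝ | 0 ≤ x ∧ Φ x ≤ t}.Nonempty :=
  ⟨0, le_refl 0, by rw [Φ.zero]; exact ht⟩

theorem setOf_bddAbove (t : ℝ) : BddAbove {x : ℝ | 0 ≤ x ∧ Φ x ≤ t} := by
  obtain ⟨x₂, hx₂0, hx₂⟩ := Φ.exists_gt t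
  refine ⟨x₂, fun x hx => ?_⟩
  by_contra h
  push_neg at h
  exact absurd (hx.2) (not_le.mpr (lt_of_lt_of_le hx₂ (Φ.mono hx₂0 h.le)))

theorem yInv_nonneg {t : ℝ} (ht : 0 ≤ t) : 0 ≤ yInv Φ t :=
  le_csSup (Φ.setOf_bddAbove t) ⟨le_refl 0, by rw [Φ.zero]; exact ht⟩

theorem le_yInv {x t : ℝ} (hx : 0 ≤ x) (h : Φ x ≤ t) : x ≤ yInv Φ t :=
  le_csSup (Φ.setOf_bddAbove t) ⟨hx, h⟩

theorem apply_yInv_le {t : ℝ} (ht : 0 ≤ t) : Φ (yInv Φ t) ≤ t := by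
  have hclosed : IsClosed {x : ℝ | 0 ≤ x ∧ Φ x ≤ t} := by
    exact (isClosed_le continuous_const continuous_id).inter
      (isClosed_le Φ.continuous' continuous_const)
  have := hclosed.csSup_mem (Φ.setOf_nonempty ht) (Φ.setOf_bddAbove t)
  exact this.2

theorem yInv_pos {t : ℝ} (ht : 0 < t) : 0 < yInv Φ t := by
  have hc : ContinuousAt Φ.toFun 0 := Φ.continuous'.continuousAt
  have : ∀ᶠ x in 𝓝 (0:ℝ), Φ x < t := by
    have := hc.eventually_lt_const (by rw [Φ.zero]; exact ht)
    exact this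
  obtain ⟨δ, hδ0, hδ⟩ := Metric.eventually_nhds_iff.mp this
  have hm : dist (δ/2) (0:ℝ) < δ := by
    rw [Real.dist_eq, sub_zero, abs_of_pos (by linarith)]; linarith
  have := hδ (y := δ/2) hm
  exact lt_of_lt_of_le (by linarith) (Φ.le_yInv (by linarith) this.le)

theorem yInv_le_two_yInv_half {t : ℝ} (ht : 0 ≤ t) : yInv Φ t ≤ 2 * yInv Φ (t/2) := by
  apply csSup_le (Φ.setOf_nonempty ht)
  rintro x ⟨hx0, hx⟩
  have : Φ (x/2) ≤ t/2 := le_trans Φ.half_le (by linarith)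
  have := Φ.le_yInv (by linarith) this
  linarith

end YoungFunction

section Lux

open MeasureTheory Filter Topology

variable {X : Type*} [MeasurableSpace X]

theorem luxNorm_congr_ae (Φ : YoungFunction) (μ : Measure X) {f g : X → ℝ}
    (h : f =ᵐ[μ] g) : luxNorm Φ μ f = luxNorm Φ μ g := by
  unfold luxNorm
  congr 1
  ext k
  have : ∫ x, Φ (f x / k) ∂μ = ∫ x, Φ (g x / k) ∂μ := by
    apply integral_congr_ae
    filter_upwards [h] with x hx
    rw [hx]
  simp [this]

/-- integral of `Φ (c·χ_E / k)`. -/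
theorem integral_indicator_young (Φ : YoungFunction) (μ : Measure X) {E : Set X}
    (hE : MeasurableSet E) (c k : ℝ) :
    ∫ x, Φ (E.indicator (fun _ => c) x / k) ∂μ = Φ (c / k) * (μ E).toReal := by
  have h1 : (fun x => Φ (E.indicator (fun _ => c) x / k))
      = E.indicator (fun _ => Φ (c / k)) := by
    funext x
    by_cases hx : x ∈ E <;> simp [Set.indicator, hx, Φ.zero]
  rw [h1, integral_indicator hE]
  simp [Measure.restrict_apply_univ, mul_comm, measureReal_def]

theorem memOrlicz_indicator (Φ : YoungFunction) (μ : Measure X) {E : Set X}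
    (hE : MeasurableSet E) (hfin : μ E < ⊤) :
    MemOrlicz Φ μ (E.indicator (fun _ => (1:ℝ))) := by
  refine ⟨(measurable_const.indicator hE).aestronglyMeasurable, 1, one_pos, ?_⟩
  have h1 : (fun x => Φ (1 * E.indicator (fun _ => (1:ℝ)) x))
      = E.indicator (fun _ => Φ 1) := by
    funext x
    by_cases hx : x ∈ E <;> simp [Set.indicator, hx, Φ.zero]
  rw [h1]
  exact (integrable_indicator_iff hE).mpr (integrableOn_const hfin.ne)

/-- Upper bound for the Luxemburg norm of an indicator. -/
theorem luxNorm_indicator_le (Φ : YoungFunction) (μ : Measure X) {E : Set X}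
    (hE : MeasurableSet E) (h0 : 0 < μ E) (hfin : μ E < ⊤) :
    luxNorm Φ μ (E.indicator (fun _ => (1:ℝ)))
      ≤ 1 / yInv Φ (1 / (μ E).toReal) := by
  set t : ℝ := 1 / (μ E).toReal with htdef
  have htoReal : 0 < (μ E).toReal := ENNReal.toReal_pos h0.ne' hfin.ne
  have ht : 0 < t := by positivity
  have hyi : 0 < yInv Φ t := Φ.yInv_pos ht
  apply csInf_le
  · exact ⟨0, fun k hk => hk.1.le⟩
  · refine ⟨by positivity, ?_⟩
    rw [integral_indicator_young Φ μ hE]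
    have : (1:ℝ) / (1 / yInv Φ t) = yInv Φ t := by field_simp
    rw [this]
    calc Φ (yInv Φ t) * (μ E).toReal ≤ t * (μ E).toReal := by
          apply mul_le_mul_of_nonneg_right (Φ.apply_yInv_le ht.le) htoReal.le
      _ = 1 := by rw [htdef]; field_simp

end Lux

section LuxLower

open MeasureTheory Filter Topology

variable {X : Type*} [MeasurableSpace X]

theorem young_exists_small (Φ : YoungFunction) (c : ℝ) {ε : ℝ} (hε : 0 < ε) :
    ∃ k : ℝ, 0 < k ∧ Φ (c / k) ≤ ε := by
  have hc : ContinuousAt Φ.toFun 0 := Φ.continuous'.continuousAt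
  have h := hc.eventually_lt_const (by rw [Φ.zero]; exact hε)
  obtain ⟨δ, hδ0, hδ⟩ := Metric.eventually_nhds_iff.mp h
  refine ⟨(|c| + 1) / δ, by positivity, ?_⟩
  have hk : (0:ℝ) < (|c| + 1) / δ := by positivity
  have habs : |c / ((|c| + 1) / δ)| < δ := by
    rw [abs_div, abs_of_pos hk, div_div_eq_mul_div, div_lt_iff₀ (by positivity)]
    nlinarith [abs_nonneg c, hδ0]
  have hd : dist (c / ((|c| + 1) / δ)) (0:ℝ) < δ := by
    rw [Real.dist_eq, sub_zero]; exact habs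
  exact (hδ hd).le

theorem le_luxNorm (Φ : YoungFunction) (μ : Measure X) (f : X → ℝ) (L : ℝ)
    (hne : ∃ k, 0 < k ∧ ∫ x, Φ (f x / k) ∂μ ≤ 1)
    (h : ∀ k, 0 < k → (∫ x, Φ (f x / k) ∂μ ≤ 1) → L ≤ k) : L ≤ luxNorm Φ μ f := by
  obtain ⟨k, hk, hk1⟩ := hne
  exact le_csInf ⟨k, hk, hk1⟩ (fun b hb => h b hb.1 hb.2)

theorem le_luxNorm_const_indicator (Φ : YoungFunction) (μ : Measure X) {E : Set X}
    (hE : MeasurableSet E) (h0 : 0 < μ E) (hfin : μ E < ⊤) (c : ℝ) :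
    |c| / yInv Φ (1 / (μ E).toReal) ≤ luxNorm Φ μ (E.indicator (fun _ => c)) := by
  set t : ℝ := 1 / (μ E).toReal with htdef
  have htoReal : 0 < (μ E).toReal := ENNReal.toReal_pos h0.ne' hfin.ne
  have ht : 0 < t := by positivity
  have hyi : 0 < yInv Φ t := Φ.yInv_pos ht
  apply le_luxNorm
  · obtain ⟨k, hk, hk1⟩ := young_exists_small Φ c ht
    refine ⟨k, hk, ?_⟩
    rw [integral_indicator_young Φ μ hE]
    calc Φ (c / k) * (μ E).toReal ≤ t * (μ E).toReal :=
          mul_le_mul_of_nonneg_right hk1 htoReal.le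
      _ = 1 := by rw [htdef]; field_simp
  · intro k hk hint
    rw [integral_indicator_young Φ μ hE] at hint
    have h2 : Φ (c / k) ≤ t := by
      rw [htdef, le_div_iff₀ htoReal]
      exact hint
    have h3 : Φ (|c| / k) ≤ t := by
      rw [show |c| / k = |c / k| by rw [abs_div, abs_of_pos hk], Φ.abs_eq]
      exact h2
    have h4 : |c| / k ≤ yInv Φ t := Φ.le_yInv (by positivity) h3
    rw [div_le_iff₀ hyi]
    rw [div_le_iff₀ hk] at h4
    linarith [mul_comm k (yInv Φ t)]

theorem le_luxNorm_mul_indicator (Φ : YoungFunction) (μ : Measure X) {F : Set X}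
    (hF : MeasurableSet F) (h0 : 0 < μ F) (hfin : μ F < ⊤)
    {u : X → ℝ} (hu : Measurable u) {ε m : ℝ} (hε : 0 < ε)
    (hbd : ∀ x ∈ F, ε ≤ |u x| ∧ |u x| ≤ m) :
    ε / yInv Φ (1 / (μ F).toReal)
      ≤ luxNorm Φ μ (fun x => u x * F.indicator (fun _ => (1:ℝ)) x) := by
  set t : ℝ := 1 / (μ F).toReal with htdef
  have htoReal : 0 < (μ F).toReal := ENNReal.toReal_pos h0.ne' hfin.ne
  have ht : 0 < t := by positivity
  have hyi : 0 < yInv Φ t := Φ.yInv_pos ht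
  have hkey : ∀ k : ℝ, (fun x => Φ (u x * F.indicator (fun _ => (1:ℝ)) x / k))
      = F.indicator (fun x => Φ (u x / k)) := by
    intro k
    funext x
    by_cases hx : x ∈ F <;> simp [Set.indicator, hx, Φ.zero]
  have hptm : ∀ k : ℝ, 0 < k → ∀ x : X,
      F.indicator (fun x => Φ (u x / k)) x ≤ F.indicator (fun _ => Φ (m / k)) x := by
    intro k hk x
    by_cases hx : x ∈ F
    · simp only [Set.indicator_of_mem hx]
      apply Φ.mono_abs
      rw [abs_div, abs_of_pos hk]
      gcongr
      exact (hbd x hx).2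
    · simp [Set.indicator_of_notMem hx]
  have hintc : ∀ c : ℝ, Integrable (F.indicator (fun _ => c)) μ :=
    fun c => (integrable_indicator_iff hF).mpr (integrableOn_const hfin.ne)
  have hintg : ∀ k : ℝ, 0 < k → Integrable (F.indicator (fun x => Φ (u x / k))) μ := by
    intro k hk
    have hmeas : Measurable (F.indicator (fun x => Φ (u x / k))) :=
      (Φ.continuous'.measurable.comp (hu.div_const k)).indicator hF
    apply Integrable.mono' (hintc (Φ (m / k))) hmeas.aestronglyMeasurable
    apply Filter.Eventually.of_forall
    intro x
    have h1 : ‖F.indicator (fun x => Φ (u x / k)) x‖ = F.indicator (fun x => Φ (u x / k)) x := by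
      rw [Real.norm_eq_abs, abs_of_nonneg]
      by_cases hx : x ∈ F <;> simp [Set.indicator, hx, Φ.nonneg]
    rw [h1]
    exact hptm k hk x
  have hconst : ∀ c : ℝ, ∫ x, F.indicator (fun _ => c) x ∂μ = c * (μ F).toReal := by
    intro c
    rw [integral_indicator_const c hF]
    simp [mul_comm, measureReal_def]
  apply le_luxNorm
  · obtain ⟨k, hk, hk1⟩ := young_exists_small Φ m ht
    refine ⟨k, hk, ?_⟩
    rw [hkey k]
    calc ∫ x, F.indicator (fun x => Φ (u x / k)) x ∂μ
        ≤ ∫ x, F.indicator (fun _ => Φ (m / k)) x ∂μ :=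
          integral_mono (hintg k hk) (hintc _) (hptm k hk)
      _ = Φ (m / k) * (μ F).toReal := hconst _
      _ ≤ t * (μ F).toReal := mul_le_mul_of_nonneg_right hk1 htoReal.le
      _ = 1 := by rw [htdef]; field_simp
  · intro k hk hint
    rw [hkey k] at hint
    have hlow : Φ (ε / k) * (μ F).toReal ≤ ∫ x, F.indicator (fun x => Φ (u x / k)) x ∂μ := by
      rw [← hconst (Φ (ε / k))]
      apply integral_mono (hintc _) (hintg k hk)
      intro x
      by_cases hx : x ∈ F
      · simp only [Set.indicator_of_mem hx]
        rw [← Φ.abs_eq (u x / k), abs_div, abs_of_pos hk]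
        apply Φ.mono (by positivity)
        gcongr
        exact (hbd x hx).1
      · simp [Set.indicator_of_notMem hx, Φ.nonneg, Φ.zero]
    have h2 : Φ (ε / k) ≤ t := by
      rw [htdef, le_div_iff₀ htoReal]
      exact le_trans hlow hint
    have h4 : ε / k ≤ yInv Φ t := Φ.le_yInv (by positivity) h2
    rw [div_le_iff₀ hyi]
    rw [div_le_iff₀ hk] at h4
    linarith [mul_comm k (yInv Φ t)]

end LuxLower

section Halving

open MeasureTheory Filter Topology

variable {X : Type*} [MeasurableSpace X]

theorem key_arith (Φ₁ Φ₂ Φ₃ : YoungFunction)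
    (hΦ : ∀ x y : ℝ, 0 ≤ x → 0 ≤ y → Φ₁ (x * y) ≤ Φ₂ x + Φ₃ y)
    {t ε C : ℝ} (ht : 0 < t) (hε : 0 < ε)
    (h : ε / yInv Φ₂ t ≤ C / yInv Φ₁ t) :
    ε * yInv Φ₃ (t / 2) ≤ 2 * C := by
  have ht2 : 0 < t / 2 := by linarith
  set a := yInv Φ₂ (t/2) with hadef
  set b := yInv Φ₃ (t/2) with hbdef
  have ha : 0 < a := Φ₂.yInv_pos ht2
  have hb : 0 ≤ b := Φ₃.yInv_nonneg ht2.le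
  have h1 : 0 < yInv Φ₁ t := Φ₁.yInv_pos ht
  have h2 : 0 < yInv Φ₂ t := Φ₂.yInv_pos ht
  have hprod : a * b ≤ yInv Φ₁ t := by
    apply Φ₁.le_yInv (by positivity)
    calc Φ₁ (a * b) ≤ Φ₂ a + Φ₃ b := hΦ a b ha.le hb
      _ ≤ t/2 + t/2 := add_le_add (Φ₂.apply_yInv_le ht2.le) (Φ₃.apply_yInv_le ht2.le)
      _ = t := by ring
  have h2a : yInv Φ₂ t ≤ 2 * a := Φ₂.yInv_le_two_yInv_half ht.le
  have hcross : ε * yInv Φ₁ t ≤ C * yInv Φ₂ t := by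
    rw [div_le_div_iff₀ h2 h1] at h
    exact h
  have hC : 0 ≤ C := by
    by_contra hC
    push_neg at hC
    nlinarith
  have hfin : ε * (a * b) ≤ C * (2 * a) := by
    calc ε * (a * b) ≤ ε * yInv Φ₁ t := by nlinarith
      _ ≤ C * yInv Φ₂ t := hcross
      _ ≤ C * (2 * a) := by nlinarith
  nlinarith

theorem exists_small_subset_pow (μ : Measure X) {E : Set X} (hE : MeasurableSet E)
    (h0 : 0 < μ E) (hfin : μ E < ⊤) (hna : NonAtomicOn μ E) (n : ℕ) :
    ∃ F, F ⊆ E ∧ MeasurableSet F ∧ 0 < μ F ∧ μ F ≤ μ E / 2 ^ n := by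
  induction n with
  | zero => exact ⟨E, subset_rfl, hE, h0, by simp⟩
  | succ n ih =>
    obtain ⟨F, hFE, hFmeas, hFpos, hFle⟩ := ih
    have hFfin : μ F < ⊤ := lt_of_le_of_lt (measure_mono hFE) hfin
    have hnotatom := hna F hFE
    rw [IsAtomSet] at hnotatom
    push_neg at hnotatom
    obtain ⟨G, hGmeas, hGF, hG⟩ := hnotatom hFmeas hFpos
    have hGne0 : μ G ≠ 0 := hG.1
    have hGneF : μ G ≠ μ F := hG.2
    have hGltF : μ G < μ F := lt_of_le_of_ne (measure_mono hGF) hGneF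
    have hGfin : μ G ≠ ⊤ := (hGltF.trans hFfin).ne
    have hdiff : μ (F \ G) = μ F - μ G := measure_diff hGF hGmeas.nullMeasurableSet hGfin
    have hdiffpos : 0 < μ (F \ G) := by
      rw [hdiff]
      exact tsub_pos_iff_lt.mpr hGltF
    have hhalf : μ E / 2 ^ n / 2 = μ E / 2 ^ (n + 1) := by
      simp [pow_succ, division_def, mul_assoc, ENNReal.mul_inv]
    by_cases hc : μ G ≤ μ F / 2
    · refine ⟨G, hGF.trans hFE, hGmeas, pos_iff_ne_zero.mpr hGne0, ?_⟩
      calc μ G ≤ μ F / 2 := hc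
        _ ≤ μ E / 2 ^ n / 2 := by exact ENNReal.div_le_div_right hFle 2
        _ = μ E / 2 ^ (n+1) := hhalf
    · push_neg at hc
      refine ⟨F \ G, (Set.diff_subset).trans hFE, hFmeas.diff hGmeas, hdiffpos, ?_⟩
      calc μ (F \ G) = μ F - μ G := hdiff
        _ ≤ μ F - μ F / 2 := tsub_le_tsub_left hc.le _
        _ = μ F / 2 := ENNReal.sub_half hFfin.ne
        _ ≤ μ E / 2 ^ n / 2 := ENNReal.div_le_div_right hFle 2
        _ = μ E / 2 ^ (n+1) := hhalf

theorem exists_small_subset (μ : Measure X) {E : Set X} (hE : MeasurableSet E)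
    (h0 : 0 < μ E) (hfin : μ E < ⊤) (hna : NonAtomicOn μ E) {δ : ℝ} (hδ : 0 < δ) :
    ∃ F, F ⊆ E ∧ MeasurableSet F ∧ 0 < μ F ∧ (μ F).toReal ≤ δ := by
  obtain ⟨n, hn⟩ := pow_unbounded_of_one_lt (R := ℝ) ((μ E).toReal / δ) one_lt_two
  obtain ⟨F, hFE, hFmeas, hFpos, hFle⟩ := exists_small_subset_pow μ hE h0 hfin hna n
  refine ⟨F, hFE, hFmeas, hFpos, ?_⟩
  have hfinn : μ E / 2 ^ n ≠ ⊤ := by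
    apply (ENNReal.div_lt_top hfin.ne (by positivity)).ne
  have := ENNReal.toReal_mono hfinn hFle
  rw [ENNReal.toReal_div] at this
  have h2 : ((2:ENNReal) ^ n).toReal = (2:ℝ)^n := by simp
  rw [h2] at this
  have hpow : (0:ℝ) < 2 ^ n := by positivity
  calc (μ F).toReal ≤ (μ E).toReal / 2 ^ n := this
    _ ≤ δ := by
      rw [div_le_iff₀ hpow]
      rw [div_lt_iff₀ hδ] at hn
      nlinarith
end Halving

end Aux

/-- necessary conditions for boundedness of `M_u` in terms of the
atomic decomposition. -/
theorem multiplication_bounded_necessary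
    {X : Type*} [MeasurableSpace X] (μ : Measure X) [SigmaFinite μ]
    (A : ℕ → Set X) (B : Set X) (hdec : AtomicDecomposition μ A B)
    (Φ₁ Φ₂ Φ₃ : YoungFunction)
    (hΦ : ∀ x y : ℝ, 0 ≤ x → 0 ≤ y → Φ₁ (x * y) ≤ Φ₂ x + Φ₃ y)
    (u : X → ℝ) (hu : Measurable u)
    (cu : ℕ → ℝ) (hcu : ∀ n, ∀ᵐ x ∂μ.restrict (A n), u x = cu n)
    (hb : OrliczBounded Φ₁ Φ₂ μ (fun f x => u x * f x)) :
    (∀ᵐ x ∂μ.restrict B, u x = 0) ∧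
      ∃ M : ℝ, ∀ n, |cu n| * yInv Φ₃ (1 / (μ (A n)).toReal) ≤ M := by
  obtain ⟨hatom, hAfin, hAdisj, hABdisj, hBmeas, hBna, hcover⟩ := hdec
  obtain ⟨C, hC, hbd⟩ := hb
  -- common argument: for any measurable F of positive finite measure on which
  -- ε ≤ |u| ≤ m (in the "a.e. constant" atom case we instead use congr), we get
  -- ε * yInv Φ₃ (t/2) ≤ 2C where t = 1/(μ F).toReal.
  constructor
  · -- part (i)
    rw [ae_restrict_iff' hBmeas]
    rw [ae_iff]
    set D : ℕ → ℕ → Set X := fun m j =>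
      ((B ∩ {x | 1/((m:ℝ)+1) ≤ |u x|}) ∩ {x | |u x| ≤ (m:ℝ)+1}) ∩ spanningSets μ j
      with hDdef
    have hDmeas : ∀ m j, MeasurableSet (D m j) := by
      intro m j
      exact ((hBmeas.inter (measurableSet_le measurable_const hu.abs)).inter
        (measurableSet_le hu.abs measurable_const)).inter (measurableSet_spanningSets μ j)
    have hDnull : ∀ m j, μ (D m j) = 0 := by
      intro m j
      by_contra hpos0
      have hDpos : 0 < μ (D m j) := pos_iff_ne_zero.mpr hpos0
      have hDfin : μ (D m j) < ⊤ :=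
        lt_of_le_of_lt (measure_mono Set.inter_subset_right) (measure_spanningSets_lt_top μ j)
      have hDsubB : D m j ⊆ B :=
        (Set.inter_subset_left).trans ((Set.inter_subset_left).trans Set.inter_subset_left)
      have hDna : NonAtomicOn μ (D m j) := fun S hS => hBna S (hS.trans hDsubB)
      set ε : ℝ := 1/((m:ℝ)+1) with hεdef
      have hε : 0 < ε := by positivity
      set x₀ : ℝ := 2*C/ε + 1 with hx₀def
      have hx₀ : 0 < x₀ := by positivity
      set s₀ : ℝ := Φ₃ x₀ with hs₀def
      have hs₀ : 0 < s₀ := Φ₃.pos hx₀.ne'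
      obtain ⟨F, hFD, hFmeas, hFpos, hFsmall⟩ :=
        exists_small_subset μ (hDmeas m j) hDpos hDfin hDna
          (δ := 1/(2*s₀)) (by positivity)
      have hFfin : μ F < ⊤ := lt_of_le_of_lt (measure_mono hFD) hDfin
      have htoReal : 0 < (μ F).toReal := ENNReal.toReal_pos hFpos.ne' hFfin.ne
      set t : ℝ := 1 / (μ F).toReal with htdef
      have ht : 0 < t := by positivity
      have hts : s₀ ≤ t / 2 := by
        have h1 := hFsmall
        rw [le_div_iff₀ (by positivity : (0:ℝ) < 2*s₀)] at h1
        rw [htdef, div_div, le_div_iff₀ (by positivity : (0:ℝ) < (μ F).toReal * 2)]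
        nlinarith
      have hbdF : ∀ x ∈ F, ε ≤ |u x| ∧ |u x| ≤ (m:ℝ)+1 := by
        intro x hx
        have := hFD hx
        exact ⟨this.1.1.2, this.1.2⟩
      have hmem := memOrlicz_indicator Φ₁ μ hFmeas hFfin
      obtain ⟨-, hlux⟩ := hbd _ hmem
      have hup := luxNorm_indicator_le Φ₁ μ hFmeas hFpos hFfin
      have hlow := le_luxNorm_mul_indicator Φ₂ μ hFmeas hFpos hFfin hu hε hbdF
      have hchain : ε / yInv Φ₂ t ≤ C / yInv Φ₁ t := by
        calc ε / yInv Φ₂ t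
            ≤ luxNorm Φ₂ μ (fun x => u x * F.indicator (fun _ => (1:ℝ)) x) := hlow
          _ ≤ C * luxNorm Φ₁ μ (F.indicator (fun _ => (1:ℝ))) := hlux
          _ ≤ C * (1 / yInv Φ₁ t) := mul_le_mul_of_nonneg_left hup hC.le
          _ = C / yInv Φ₁ t := by ring
      have harith := key_arith Φ₁ Φ₂ Φ₃ hΦ ht hε hchain
      have hyInvlarge : x₀ ≤ yInv Φ₃ (t/2) := Φ₃.le_yInv hx₀.le (by rw [← hs₀def]; exact hts)
      have : ε * x₀ ≤ 2 * C := le_trans (mul_le_mul_of_nonneg_left hyInvlarge hε.le) harith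
      rw [hx₀def] at this
      have hεx : ε * (2*C/ε + 1) = 2*C + ε := by field_simp
      rw [hεx] at this
      linarith
    have hsub : {a | ¬(a ∈ B → u a = 0)} ⊆ ⋃ m, ⋃ j, D m j := by
      intro x hx
      simp only [Set.mem_setOf_eq] at hx
      push_neg at hx
      obtain ⟨hxB, hxu⟩ := hx
      have habs : 0 < |u x| := abs_pos.mpr hxu
      obtain ⟨m₁, hm₁⟩ := exists_nat_ge (1/|u x|)
      obtain ⟨m₂, hm₂⟩ := exists_nat_ge |u x|
      obtain ⟨j, hj⟩ := Set.mem_iUnion.mp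
        (by rw [iUnion_spanningSets]; exact Set.mem_univ x :
          x ∈ ⋃ i, spanningSets μ i)
      refine Set.mem_iUnion.mpr ⟨max m₁ m₂, Set.mem_iUnion.mpr ⟨j, ?_⟩⟩
      refine ⟨⟨⟨hxB, ?_⟩, ?_⟩, hj⟩
      · simp only [Set.mem_setOf_eq]
        have hcast : (m₁ : ℝ) ≤ ((max m₁ m₂ : ℕ) : ℝ) := Nat.cast_le.mpr (le_max_left m₁ m₂)
        have hM : (1:ℝ)/|u x| ≤ ((max m₁ m₂ : ℕ) : ℝ) + 1 := by linarith
        have h2 := one_div_le_one_div_of_le (by positivity) hM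
        rwa [one_div_one_div] at h2
      · simp only [Set.mem_setOf_eq]
        have hcast : (m₂ : ℝ) ≤ (max m₁ m₂ : ℕ) := Nat.cast_le.mpr (le_max_right m₁ m₂)
        linarith
    exact measure_mono_null hsub (measure_iUnion_null fun m => measure_iUnion_null fun j => hDnull m j)
  · -- part (ii)
    refine ⟨4 * C, fun n => ?_⟩
    rcases eq_or_ne (cu n) 0 with hcu0 | hcu0
    · rw [hcu0]
      simp
      positivity
    · obtain ⟨hAmeas, hApos, -⟩ := hatom n
      have hfin := hAfin n
      have htoReal : 0 < (μ (A n)).toReal := ENNReal.toReal_pos hApos.ne' hfin.ne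
      set t : ℝ := 1 / (μ (A n)).toReal with htdef
      have ht : 0 < t := by positivity
      have hae : (fun x => u x * (A n).indicator (fun _ => (1:ℝ)) x)
          =ᵐ[μ] (A n).indicator (fun _ => cu n) := by
        have hres := (ae_restrict_iff' hAmeas).mp (hcu n)
        filter_upwards [hres] with x hx
        by_cases hxA : x ∈ A n
        · simp [Set.indicator_of_mem hxA, hx hxA]
        · simp [Set.indicator_of_notMem hxA]
      have hmem := memOrlicz_indicator Φ₁ μ hAmeas hfin
      obtain ⟨-, hlux⟩ := hbd _ hmem
      have hup := luxNorm_indicator_le Φ₁ μ hAmeas hApos hfin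
      have hlow : |cu n| / yInv Φ₂ t
          ≤ luxNorm Φ₂ μ (fun x => u x * (A n).indicator (fun _ => (1:ℝ)) x) := by
        rw [luxNorm_congr_ae Φ₂ μ hae]
        exact le_luxNorm_const_indicator Φ₂ μ hAmeas hApos hfin (cu n)
      have hchain : |cu n| / yInv Φ₂ t ≤ C / yInv Φ₁ t := by
        calc |cu n| / yInv Φ₂ t
            ≤ luxNorm Φ₂ μ (fun x => u x * (A n).indicator (fun _ => (1:ℝ)) x) := hlow
          _ ≤ C * luxNorm Φ₁ μ ((A n).indicator (fun _ => (1:ℝ))) := hlux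
          _ ≤ C * (1 / yInv Φ₁ t) := mul_le_mul_of_nonneg_left hup hC.le
          _ = C / yInv Φ₁ t := by ring
      have harith := key_arith Φ₁ Φ₂ Φ₃ hΦ ht (abs_pos.mpr hcu0) hchain
      have h2 : yInv Φ₃ t ≤ 2 * yInv Φ₃ (t/2) := Φ₃.yInv_le_two_yInv_half ht.le
      calc |cu n| * yInv Φ₃ t ≤ |cu n| * (2 * yInv Φ₃ (t/2)) :=
            mul_le_mul_of_nonneg_left h2 (abs_nonneg _)
        _ = 2 * (|cu n| * yInv Φ₃ (t/2)) := by ring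
        _ ≤ 2 * (2 * C) := by linarith
        _ = 4 * C := by ring
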